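/- arXiv:math/0505627 — 2 statements merged into one kernel-verified Lean document; each statement's English description precedes it below -/
import Mathlib

section
/- If i is not a jump for a wandering N-gon T satisfying the standing assumptions (i.e., d·s_{N−2}(T_i) ≤ s_{N−2}(T_{i+1})), then for every k ∈ {1, …, N−2}, the image-hole of H_k(T_i) equals H_k(T_{i+1}). -/
open MeasureTheory Set Metric Filter Topology

noncomputable section

abbrev S1 := AddCircle (1 : ℝ)

def fd (d : ℕ) : S1 → S1 := fun x => d • x

def len (A : Set S1) : ℝ := (volume A).toReal

def IsHole (B H : Set S1) : Prop := ∃ x ∈ Bᶜ, H = connectedComponentIn Bᶜ x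

def openArc (u w : S1) : Set S1 := {x | SBtw.sbtw u x w}

def OrientPresOn (g : S1 → S1) (B : Set S1) : Prop :=
  Set.InjOn g B ∧ ∀ a ∈ B, ∀ b ∈ B, ∀ c ∈ B, SBtw.sbtw a b c → SBtw.sbtw (g a) (g b) (g c)

def emb (x : S1) : ℂ := (AddCircle.toCircle x : ℂ)

def chord (a b : S1) : Set ℂ := segment ℝ (emb a) (emb b)

def CH (A : Set S1) : Set ℂ := convexHull ℝ (emb '' A)

def Wandering (d N : ℕ) (T : Set S1) : Prop :=
  ∀ i j : ℕ, ((fd d)^[i] '' T).ncard = N ∧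
    (i ≠ j → Disjoint (CH ((fd d)^[i] '' T)) (CH ((fd d)^[j] '' T)))

def IsHoleEnum (B : Set S1) {N : ℕ} (H : Fin N → Set S1) : Prop :=
  Function.Injective H ∧ (∀ k, IsHole B (H k)) ∧ (∀ G, IsHole B G → ∃ k, H k = G) ∧
  ∀ k l : Fin N, k ≤ l → len (H k) ≤ len (H l)

def rem (d : ℕ) (s : ℝ) : ℝ := s - (⌊(d : ℝ) * s⌋ : ℝ) / d

def ImageHoleRel (g : S1 → S1) (H K : Set S1) : Prop :=
  ∃ u w : S1, u ≠ w ∧ H = openArc u w ∧ K = openArc (g u) (g w)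

def InLimitSet (d : ℕ) (T : Set S1) (a b : S1) : Prop :=
  ∃ φ : ℕ → ℕ, StrictMono φ ∧ ∃ u v : ℕ → S1,
    (∀ n, u n ∈ (fd d)^[φ n] '' T ∧ v n ∈ (fd d)^[φ n] '' T) ∧
    Tendsto (fun n => hausdorffDist (chord (u n) (v n)) (chord a b)) atTop (nhds 0)

namespace St16

noncomputable def rho (u x : S1) : ℝ :=
  (QuotientAddGroup.equivIcoMod (zero_lt_one : (0:ℝ) < 1) 0 (x - u) : ℝ)

noncomputable def rho' (u x : S1) : ℝ :=
  (QuotientAddGroup.equivIocMod (zero_lt_one : (0:ℝ) < 1) 0 (x - u) : ℝ)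

lemma sbtw_iff'' (u x w : S1) : SBtw.sbtw u x w ↔
    (rho u x ≤ rho' u w ∧ ¬ (rho w x ≤ rho' w u)) := sbtw_iff_btw_not_btw

lemma rho_mem (u x : S1) : rho u x ∈ Ico (0:ℝ) 1 := by
  have := (QuotientAddGroup.equivIcoMod (zero_lt_one : (0:ℝ) < 1) 0 (x - u)).2
  simpa [rho] using this

lemma rho'_mem (u x : S1) : rho' u x ∈ Ioc (0:ℝ) 1 := by
  have := (QuotientAddGroup.equivIocMod (zero_lt_one : (0:ℝ) < 1) 0 (x - u)).2
  simpa [rho'] using this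

lemma coe_rho (u x : S1) : ((rho u x : ℝ) : S1) = x - u := by
  have := (QuotientAddGroup.equivIcoMod (zero_lt_one : (0:ℝ) < 1) 0).symm_apply_apply (x - u)
  rwa [QuotientAddGroup.equivIcoMod_symm_apply] at this

lemma coe_rho' (u x : S1) : ((rho' u x : ℝ) : S1) = x - u := by
  have := (QuotientAddGroup.equivIocMod (zero_lt_one : (0:ℝ) < 1) 0).symm_apply_apply (x - u)
  rwa [QuotientAddGroup.equivIocMod_symm_apply] at this

lemma coe_one : ((1 : ℝ) : S1) = 0 := AddCircle.coe_period 1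

lemma coe_inj {r s : ℝ} (hr : r ∈ Ico (0:ℝ) 1) (hs : s ∈ Ico (0:ℝ) 1)
    (h : ((r : ℝ) : S1) = (s : ℝ)) : r = s := by
  have := AddCircle.coe_eq_coe_iff_of_mem_Ico (p := (1:ℝ)) (a := 0)
    (by simpa using hr) (by simpa using hs)
  exact this.1 h

lemma rho_unique {u x : S1} {r : ℝ} (hr : r ∈ Ico (0:ℝ) 1)
    (h : ((r : ℝ) : S1) = x - u) : rho u x = r :=
  coe_inj (rho_mem u x) hr (by rw [coe_rho, h])

lemma rho'_unique {u x : S1} {r : ℝ} (hr : r ∈ Ioc (0:ℝ) 1)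
    (h : ((r : ℝ) : S1) = x - u) : rho' u x = r := by
  have hco : ((rho' u x : ℝ) : S1) = (r : ℝ) := by rw [coe_rho', h]
  have h2 := rho'_mem u x
  have h3 : ((rho' u x - r : ℝ) : S1) = 0 := by
    rw [AddCircle.coe_sub, hco, sub_self]
  rw [AddCircle.coe_eq_zero_iff] at h3
  obtain ⟨n, hn⟩ := h3
  have hn' : rho' u x - r = (n : ℝ) := by simpa [zsmul_eq_mul] using hn.symm
  have hb : (-1 : ℝ) < (n:ℝ) := by rw [← hn']; nlinarith [h2.1, h2.2, hr.1, hr.2]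
  have hb' : (n : ℝ) < 1 := by rw [← hn']; nlinarith [h2.1, h2.2, hr.1, hr.2]
  have hn0 : n = 0 := by
    have b1 : (-1 : ℤ) < n := by exact_mod_cast hb
    have b2 : n < 1 := by exact_mod_cast hb'
    omega
  rw [hn0] at hn'
  push_cast at hn'
  linarith

lemma rho_self (u : S1) : rho u u = 0 :=
  rho_unique (by constructor <;> norm_num) (by simp)

lemma rho_eq_zero_iff {u x : S1} : rho u x = 0 ↔ x = u := by
  constructor
  · intro h
    have h2 := coe_rho u x
    rw [h] at h2
    have : ((0:ℝ) : S1) = 0 := by norm_num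
    rw [this] at h2
    have := h2.symm
    rw [sub_eq_zero] at this
    exact this
  · rintro rfl; exact rho_self _

lemma rho_pos {u x : S1} (h : x ≠ u) : 0 < rho u x :=
  lt_of_le_of_ne (rho_mem u x).1 (fun hc => h (rho_eq_zero_iff.1 hc.symm))

lemma rho_inj {u x y : S1} (h : rho u x = rho u y) : x = y := by
  have h1 := coe_rho u x
  have h2 := coe_rho u y
  rw [h] at h1
  have h3 := h1.symm.trans h2
  exact sub_left_inj.1 h3

lemma rho'_eq_rho {u x : S1} (h : x ≠ u) : rho' u x = rho u x := by
  have hm := rho_mem u x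
  exact rho'_unique ⟨rho_pos h, hm.2.le⟩ (coe_rho u x)

lemma rho'_self (u : S1) : rho' u u = 1 :=
  rho'_unique (by constructor <;> norm_num) (by rw [coe_one]; simp)

lemma rho_le_rho' (w u : S1) : rho w u ≤ rho' w u := by
  rcases eq_or_ne u w with rfl | h
  · rw [rho_self, rho'_self]; norm_num
  · rw [rho'_eq_rho h]

/-- The key characterization of strict circular betweenness. -/
lemma sbtw_iff {u x w : S1} : SBtw.sbtw u x w ↔ 0 < rho u x ∧ rho u x < rho u w := by
  rw [sbtw_iff'']
  rcases eq_or_ne x u with rfl | hxu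
  · rw [rho_self]
    simp only [lt_irrefl, false_and, iff_false, not_and, not_not]
    intro _
    exact rho_le_rho' w x
  · have ha0 : 0 < rho u x := rho_pos hxu
    have ha1 : rho u x < 1 := (rho_mem u x).2
    rcases eq_or_ne w u with rfl | hwu
    · constructor
      · rintro ⟨h1, h2⟩; exact absurd h1 h2
      · rintro ⟨-, h2⟩; rw [rho_self] at h2; linarith
    · have hb0 : 0 < rho u w := rho_pos hwu
      have hb1 : rho u w < 1 := (rho_mem u w).2
      have h'uw : rho' u w = rho u w := rho'_eq_rho hwu
      have h'wu : rho' w u = 1 - rho u w := by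
        refine rho'_unique ⟨by linarith, by linarith⟩ ?_
        rw [AddCircle.coe_sub, coe_one, coe_rho]
        abel
      rcases eq_or_ne x w with rfl | hxw
      · constructor
        · rintro ⟨-, h2⟩
          refine absurd ?_ h2
          rw [rho_self, h'wu]
          linarith
        · rintro ⟨-, h2⟩; linarith
      · have hab : rho u x ≠ rho u w := fun hc => hxw (rho_inj hc)
        rcases lt_or_gt_of_ne hab with hlt | hgt
        · have hwx : rho w x = rho u x - rho u w + 1 := by
            refine rho_unique ⟨by linarith, by linarith⟩ ?_
            rw [AddCircle.coe_add, AddCircle.coe_sub, coe_one, coe_rho, coe_rho]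
            abel
          constructor
          · rintro ⟨-, -⟩; exact ⟨ha0, hlt⟩
          · rintro ⟨-, -⟩
            refine ⟨by rw [h'uw]; exact hlt.le, fun hc => ?_⟩
            rw [hwx, h'wu] at hc
            linarith
        · constructor
          · rintro ⟨h1, -⟩
            rw [h'uw] at h1
            exact absurd h1 (not_le.2 hgt)
          · rintro ⟨-, h2⟩; linarith


lemma mem_openArc {u w x : S1} : x ∈ openArc u w ↔ 0 < rho u x ∧ rho u x < rho u w := sbtw_iff

lemma eq_add_rho (u x : S1) : x = u + ((rho u x : ℝ) : S1) := by rw [coe_rho]; abel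

lemma rho_add {u : S1} {t : ℝ} (h : t ∈ Ico (0:ℝ) 1) : rho u (u + ((t:ℝ):S1)) = t :=
  rho_unique h (by abel)

lemma openArc_eq_image (u w : S1) :
    openArc u w = (fun t : ℝ => u + ((t:ℝ):S1)) '' Ioo 0 (rho u w) := by
  ext x
  simp only [mem_openArc, mem_image, mem_Ioo]
  constructor
  · rintro ⟨h1, h2⟩
    exact ⟨rho u x, ⟨h1, h2⟩, (eq_add_rho u x).symm⟩
  · rintro ⟨t, ⟨ht0, htw⟩, rfl⟩
    have ht1 : t < 1 := htw.trans (rho_mem u w).2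
    rw [rho_add ⟨ht0.le, ht1⟩]
    exact ⟨ht0, htw⟩

lemma continuous_param (u : S1) : Continuous (fun t : ℝ => u + ((t:ℝ):S1)) := by
  exact continuous_const.add (AddCircle.continuous_mk' 1)

lemma isOpen_openArc (u w : S1) : IsOpen (openArc u w) := by
  rw [openArc_eq_image]
  have h1 : IsOpenMap (fun t : ℝ => u + ((t:ℝ):S1)) := by
    have : (fun t : ℝ => u + ((t:ℝ):S1)) = (fun y : S1 => u + y) ∘ ((↑) : ℝ → S1) := rfl
    rw [this]
    exact (Homeomorph.addLeft u).isOpenMap.comp QuotientAddGroup.isOpenMap_coe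
  exact h1 _ isOpen_Ioo

lemma isPreconnected_openArc (u w : S1) : IsPreconnected (openArc u w) := by
  rw [openArc_eq_image]
  exact isPreconnected_Ioo.image _ (continuous_param u).continuousOn

lemma openArc_nonempty {u w : S1} (h : u ≠ w) : (openArc u w).Nonempty := by
  have hb : 0 < rho u w := rho_pos (Ne.symm h)
  have hb1 : rho u w < 1 := (rho_mem u w).2
  refine ⟨u + ((rho u w / 2 : ℝ) : S1), ?_⟩
  rw [mem_openArc, rho_add ⟨by linarith, by linarith⟩]
  constructor <;> linarith

lemma left_not_mem_openArc {u w : S1} : u ∉ openArc u w := by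
  rw [mem_openArc, rho_self]
  rintro ⟨h, -⟩; exact lt_irrefl _ h

lemma right_not_mem_openArc {u w : S1} : w ∉ openArc u w := by
  rw [mem_openArc]
  rintro ⟨-, h⟩; exact lt_irrefl _ h

lemma openArc_cover {u w x : S1} (huw : u ≠ w) (hxu : x ≠ u) (hxw : x ≠ w) :
    x ∈ openArc u w ∨ x ∈ openArc w u := by
  have ha0 : 0 < rho u x := rho_pos hxu
  have ha1 : rho u x < 1 := (rho_mem u x).2
  have hb0 : 0 < rho u w := rho_pos (Ne.symm huw)
  have hb1 : rho u w < 1 := (rho_mem u w).2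
  have hab : rho u x ≠ rho u w := fun hc => hxw (rho_inj hc)
  rcases lt_or_gt_of_ne hab with hlt | hgt
  · exact Or.inl (mem_openArc.2 ⟨ha0, hlt⟩)
  · refine Or.inr (mem_openArc.2 ?_)
    have hwx : rho w x = rho u x - rho u w := by
      refine rho_unique ⟨by linarith, by linarith⟩ ?_
      rw [AddCircle.coe_sub, coe_rho, coe_rho]
      abel
    have hwu : rho w u = 1 - rho u w := by
      refine rho_unique ⟨by linarith, by linarith⟩ ?_
      rw [AddCircle.coe_sub, coe_one, coe_rho]
      abel
    rw [hwx, hwu]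
    constructor <;> linarith

lemma openArc_disjoint (u w : S1) : Disjoint (openArc u w) (openArc w u) := by
  rw [Set.disjoint_left]
  intro x h1 h2
  have h1' : SBtw.sbtw u x w := h1
  have h2' : SBtw.sbtw w x u := h2
  exact sbtw_asymm h1' h2' 

lemma openArc_inj {u w u' w' : S1} (h : u ≠ w) (heq : openArc u w = openArc u' w') :
    u = u' ∧ w = w' := by
  have hne : (openArc u w).Nonempty := openArc_nonempty h
  have h' : u' ≠ w' := by
    rintro rfl
    rw [heq] at hne
    obtain ⟨x, hx⟩ := hne
    rw [mem_openArc, rho_self] at hx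
    linarith [hx.1, hx.2]
  have hb0 : 0 < rho u w := rho_pos (Ne.symm h)
  have hb1 : rho u w < 1 := (rho_mem u w).2
  have hb0' : 0 < rho u' w' := rho_pos (Ne.symm h')
  have hb1' : rho u' w' < 1 := (rho_mem u' w').2
  have huu' : u = u' := by
    by_contra hne'
    have hc0 : 0 < rho u u' := rho_pos (Ne.symm hne')
    have hc1 : rho u u' < 1 := (rho_mem u u').2
    rcases lt_or_ge (rho u u') (rho u w) with hlt | hge
    · have hm : u' ∈ openArc u w := mem_openArc.2 ⟨hc0, hlt⟩
      rw [heq, mem_openArc, rho_self] at hm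
      exact lt_irrefl _ hm.1
    · set t := min (rho u' w' / 2) ((1 - rho u u') / 2) with htdef
      have ht0 : 0 < t := lt_min (by linarith) (by linarith)
      have htw' : t < rho u' w' := (min_le_left _ _).trans_lt (by linarith)
      have htc : rho u u' + t < 1 := by
        have := min_le_right (rho u' w' / 2) ((1 - rho u u') / 2)
        rw [← htdef] at this
        linarith
      have ht1 : t < 1 := by linarith
      have hx : u' + ((t:ℝ):S1) ∈ openArc u' w' := by
        rw [mem_openArc, rho_add ⟨ht0.le, ht1⟩]
        exact ⟨ht0, htw'⟩
      rw [← heq, mem_openArc] at hx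
      have hcomp : rho u (u' + ((t:ℝ):S1)) = rho u u' + t := by
        refine rho_unique ⟨by linarith, htc⟩ ?_
        rw [AddCircle.coe_add, coe_rho]
        abel
      rw [hcomp] at hx
      linarith [hx.2]
  subst huu'
  have hww' : rho u w = rho u w' := by
    by_contra hne'
    rcases lt_or_gt_of_ne hne' with hlt | hgt
    · set m := (rho u w + rho u w') / 2 with hm
      have h1 : u + ((m:ℝ):S1) ∈ openArc u w' := by
        rw [mem_openArc, rho_add ⟨by linarith, by linarith⟩]
        constructor <;> [linarith; linarith]
      rw [← heq, mem_openArc, rho_add ⟨by linarith, by linarith⟩] at h1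
      linarith [h1.2]
    · set m := (rho u w + rho u w') / 2 with hm
      have h1 : u + ((m:ℝ):S1) ∈ openArc u w := by
        rw [mem_openArc, rho_add ⟨by linarith, by linarith⟩]
        constructor <;> [linarith; linarith]
      rw [heq, mem_openArc, rho_add ⟨by linarith, by linarith⟩] at h1
      linarith [h1.2]
  exact ⟨rfl, rho_inj hww'⟩


lemma isOpen_mk_image {s : Set ℝ} (hs : IsOpen s) : IsOpen (((↑) : ℝ → S1) '' s) :=
  QuotientAddGroup.isOpenMap_coe s hs

lemma image_add_eq_preimage (u : S1) (S : Set S1) :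
    (fun y : S1 => u + y) '' S = (fun x : S1 => -u + x) ⁻¹' S := by
  ext x
  simp only [mem_image, mem_preimage]
  constructor
  · rintro ⟨y, hy, rfl⟩
    simpa using hy
  · intro h
    exact ⟨-u + x, h, by abel⟩

lemma vol_mk_image {r : ℝ} (hr0 : 0 ≤ r) (hr1 : r < 1) :
    volume (((↑) : ℝ → S1) '' Ioo 0 r) = ENNReal.ofReal r := by
  have hopen : IsOpen (((↑) : ℝ → S1) '' Ioo 0 r) := isOpen_mk_image isOpen_Ioo
  have hmp := AddCircle.measurePreserving_mk (T := 1) 0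
  have hpre := hmp.measure_preimage hopen.measurableSet.nullMeasurableSet
  rw [← hpre, Measure.restrict_apply (hmp.measurable hopen.measurableSet)]
  have hset : ((↑) : ℝ → S1) ⁻¹' (((↑) : ℝ → S1) '' Ioo 0 r) ∩ Ioc 0 (0 + 1) = Ioo 0 r := by
    ext y
    simp only [mem_inter_iff, mem_preimage, mem_image, mem_Ioo, mem_Ioc, zero_add]
    constructor
    · rintro ⟨⟨z, ⟨hz0, hzr⟩, hzy⟩, hy0, hy1⟩
      have hc : ((y - z : ℝ) : S1) = 0 := by
        rw [AddCircle.coe_sub, ← hzy, sub_self]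
      rw [AddCircle.coe_eq_zero_iff] at hc
      obtain ⟨n, hn⟩ := hc
      have hn' : y - z = (n : ℝ) := by simpa [zsmul_eq_mul] using hn.symm
      have hb1 : (n:ℝ) < 1 := by rw [← hn']; linarith
      have hb2 : (-1:ℝ) < (n:ℝ) := by rw [← hn']; linarith
      have : n = 0 := by
        have b1 : (-1:ℤ) < n := by exact_mod_cast hb2
        have b2 : n < (1:ℤ) := by exact_mod_cast hb1
        omega
      rw [this] at hn'
      push_cast at hn'
      have : y = z := by linarith
      exact this ▸ ⟨hz0, hzr⟩
    · intro hy
      exact ⟨⟨y, hy, rfl⟩, hy.1, by linarith [hy.2]⟩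
  rw [hset, Real.volume_Ioo]
  norm_num

lemma vol_openArc (u w : S1) : volume (openArc u w) = ENNReal.ofReal (rho u w) := by
  have harc : openArc u w = (fun y : S1 => u + y) '' (((↑) : ℝ → S1) '' Ioo 0 (rho u w)) := by
    rw [openArc_eq_image, ← image_comp]
    rfl
  rw [harc, image_add_eq_preimage, measure_preimage_add,
    vol_mk_image (rho_mem u w).1 (rho_mem u w).2]

lemma len_openArc (u w : S1) : len (openArc u w) = rho u w := by
  rw [len, vol_openArc, ENNReal.toReal_ofReal (rho_mem u w).1]

lemma vol_singleton (x : S1) : volume ({x} : Set S1) = 0 := by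
  have hx : x = (((rho 0 x : ℝ)) : S1) := by
    have := eq_add_rho 0 x
    rwa [zero_add] at this
  set x₀ := rho 0 x with hx₀
  rw [hx]
  have hmp := AddCircle.measurePreserving_mk (T := 1) x₀
  have hms : MeasurableSet ({((x₀ : ℝ) : S1)} : Set S1) := isClosed_singleton.measurableSet
  have hpre := hmp.measure_preimage hms.nullMeasurableSet
  rw [← hpre, Measure.restrict_apply (hmp.measurable hms)]
  have hset : ((↑) : ℝ → S1) ⁻¹' {((x₀ : ℝ) : S1)} ∩ Ioc x₀ (x₀ + 1) = {x₀ + 1} := by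
    ext y
    simp only [mem_inter_iff, mem_preimage, mem_singleton_iff, mem_Ioc]
    constructor
    · rintro ⟨hy, hy0, hy1⟩
      have hc : ((y - x₀ : ℝ) : S1) = 0 := by
        rw [AddCircle.coe_sub, hy, sub_self]
      rw [AddCircle.coe_eq_zero_iff] at hc
      obtain ⟨n, hn⟩ := hc
      have hn' : y - x₀ = (n : ℝ) := by simpa [zsmul_eq_mul] using hn.symm
      have hb1 : (0:ℝ) < (n:ℝ) := by rw [← hn']; linarith
      have hb2 : (n:ℝ) ≤ 1 := by rw [← hn']; linarith
      have : n = 1 := by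
        have b1 : (0:ℤ) < n := by exact_mod_cast hb1
        have b2 : n ≤ (1:ℤ) := by exact_mod_cast hb2
        omega
      rw [this] at hn'
      push_cast at hn'
      linarith
    · rintro rfl
      refine ⟨?_, by linarith, le_refl _⟩
      rw [AddCircle.coe_add, coe_one, add_zero]
  rw [hset]
  simp

lemma vol_finite_zero {B : Set S1} (hB : B.Finite) : volume B = 0 := by
  rw [← Set.biUnion_of_singleton B]
  exact (measure_biUnion_null_iff hB.countable).2 fun x _ => vol_singleton x

lemma vol_compl_finite {B : Set S1} (hB : B.Finite) : volume Bᶜ = 1 := by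
  rw [measure_compl hB.isClosed.measurableSet
    (by rw [vol_finite_zero hB]; exact ENNReal.zero_ne_top)]
  rw [vol_finite_zero hB, AddCircle.measure_univ]
  norm_num


section Holes

variable {B : Set S1}

lemma not_in_B {u w x : S1} (hadj : openArc u w ∩ B = ∅) (hx : x ∈ openArc u w) : x ∈ Bᶜ := by
  intro hmem
  have : x ∈ openArc u w ∩ B := ⟨hx, hmem⟩
  rw [hadj] at this
  exact this

lemma core_component (hB : B.Finite) {u w x : S1} (hu : u ∈ B) (hw : w ∈ B) (huw : u ≠ w)
    (hadj : openArc u w ∩ B = ∅) (hx : x ∈ openArc u w) :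
    connectedComponentIn Bᶜ x = openArc u w := by
  have hxB : x ∈ Bᶜ := not_in_B hadj hx
  apply subset_antisymm
  · have hsub : Bᶜ ⊆ openArc u w ∪ openArc w u := by
      intro y hy
      have hyu : y ≠ u := fun h => hy (h ▸ hu)
      have hyw : y ≠ w := fun h => hy (h ▸ hw)
      exact openArc_cover huw hyu hyw
    refine IsPreconnected.subset_left_of_subset_union (isOpen_openArc u w)
      (isOpen_openArc w u) (openArc_disjoint u w)
      ((connectedComponentIn_subset Bᶜ x).trans hsub)
      ⟨x, mem_connectedComponentIn hxB, hx⟩ isPreconnected_connectedComponentIn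
  · exact (isPreconnected_openArc u w).subset_connectedComponentIn hx
      (fun y hy => not_in_B hadj hy)

lemma exists_adjacent (hB : B.Finite) (h2 : 2 ≤ B.ncard) {x : S1} (hx : x ∉ B) :
    ∃ u ∈ B, ∃ w ∈ B, u ≠ w ∧ openArc u w ∩ B = ∅ ∧ x ∈ openArc u w := by
  have hne : B.Nonempty := by
    rcases B.eq_empty_or_nonempty with rfl | h
    · simp [Set.ncard_empty] at h2
    · exact h
  obtain ⟨w, hwB, hwmin⟩ := Set.exists_min_image B (rho x) hB hne
  obtain ⟨u, huB, humax⟩ := Set.exists_max_image B (rho x) hB hne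
  have hβ0 : 0 < rho x w := rho_pos (fun h => hx (h ▸ hwB))
  have hγ1 : rho x u < 1 := (rho_mem x u).2
  have hβγ : rho x w ≤ rho x u := hwmin u huB
  have hlt : rho x w < rho x u := by
    rcases lt_or_eq_of_le hβγ with hlt | heq
    · exact hlt
    · exfalso
      obtain ⟨a, b, ha, hb, hab⟩ := (Set.one_lt_ncard_iff hB).1 (by omega)
      have hra : rho x a = rho x w := le_antisymm (heq ▸ humax a ha) (hwmin a ha)
      have hrb : rho x b = rho x w := le_antisymm (heq ▸ humax b hb) (hwmin b hb)
      exact hab (rho_inj (hra.trans hrb.symm))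
  have hγ0 : 0 < rho x u := hβ0.trans hlt
  have hxu : rho u x = 1 - rho x u := by
    refine rho_unique ⟨by linarith, by linarith⟩ ?_
    rw [AddCircle.coe_sub, coe_one, coe_rho]
    abel
  have huw : rho u w = rho x w - rho x u + 1 := by
    refine rho_unique ⟨by linarith, by linarith⟩ ?_
    rw [AddCircle.coe_add, AddCircle.coe_sub, coe_one, coe_rho, coe_rho]
    abel
  have hune : u ≠ w := by
    intro h
    rw [h, rho_self] at huw
    linarith
  refine ⟨u, huB, w, hwB, hune, ?_,
    mem_openArc.2 ⟨by rw [hxu]; linarith, by rw [hxu, huw]; linarith⟩⟩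
  rw [Set.eq_empty_iff_forall_notMem]
  rintro b ⟨hbarc, hbB⟩
  rw [mem_openArc] at hbarc
  have hbu : b ≠ u := by
    intro h
    rw [h, rho_self] at hbarc
    exact lt_irrefl _ hbarc.1
  have hc : rho x b ≤ rho x u := humax b hbB
  have hc' : rho x w ≤ rho x b := hwmin b hbB
  have hcγ : rho x b < rho x u := lt_of_le_of_ne hc (fun h => hbu (rho_inj h))
  have hrub : rho u b = rho x b - rho x u + 1 := by
    refine rho_unique ⟨by linarith, by linarith⟩ ?_
    rw [AddCircle.coe_add, AddCircle.coe_sub, coe_one, coe_rho, coe_rho]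
    abel
  rw [hrub, huw] at hbarc
  linarith [hbarc.2]

lemma hole_iff (hB : B.Finite) (h2 : 2 ≤ B.ncard) (G : Set S1) :
    IsHole B G ↔ ∃ u ∈ B, ∃ w ∈ B, u ≠ w ∧ openArc u w ∩ B = ∅ ∧ G = openArc u w := by
  constructor
  · rintro ⟨x, hx, rfl⟩
    obtain ⟨u, hu, w, hw, hne, hadj, hxarc⟩ := exists_adjacent hB h2 hx
    exact ⟨u, hu, w, hw, hne, hadj, core_component hB hu hw hne hadj hxarc⟩
  · rintro ⟨u, hu, w, hw, hne, hadj, rfl⟩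
    obtain ⟨x, hx⟩ := openArc_nonempty hne
    exact ⟨x, not_in_B hadj hx, (core_component hB hu hw hne hadj hx).symm⟩

lemma holes_disjoint {G G' : Set S1} (hG : IsHole B G) (hG' : IsHole B G') (hne : G ≠ G') :
    Disjoint G G' := by
  rw [Set.disjoint_left]
  intro z hz hz'
  obtain ⟨x, hx, rfl⟩ := hG
  obtain ⟨y, hy, rfl⟩ := hG'
  exact hne ((connectedComponentIn_eq hz).trans (connectedComponentIn_eq hz').symm)

end Holes

section Dyn

lemma rho_fd {d : ℕ} {u w : S1} (h : (d:ℝ) * rho u w < 1) :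
    rho (fd d u) (fd d w) = (d:ℝ) * rho u w := by
  have h0 : 0 ≤ rho u w := (rho_mem u w).1
  refine rho_unique ⟨by positivity, h⟩ ?_
  have h1 : fd d w - fd d u = d • (w - u) := by
    show d • w - d • u = _
    rw [smul_sub]
  rw [h1, ← coe_rho u w, ← AddCircle.coe_nsmul]
  congr 1
  simp [nsmul_eq_mul]

lemma image_adjacent {d : ℕ} {B : Set S1} (hor1 : Set.InjOn (fd d) B)
    (hor2 : ∀ a ∈ B, ∀ b ∈ B, ∀ c ∈ B, SBtw.sbtw a b c → SBtw.sbtw (fd d a) (fd d b) (fd d c))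
    {u w : S1} (hu : u ∈ B) (hw : w ∈ B) (huw : u ≠ w) (hadj : openArc u w ∩ B = ∅) :
    fd d u ≠ fd d w ∧ openArc (fd d u) (fd d w) ∩ (fd d '' B) = ∅ := by
  have hne : fd d u ≠ fd d w := fun h => huw (hor1 hu hw h)
  refine ⟨hne, ?_⟩
  rw [Set.eq_empty_iff_forall_notMem]
  rintro y ⟨hyarc, b, hbB, rfl⟩
  have hbu : b ≠ u := by
    rintro rfl
    exact left_not_mem_openArc hyarc
  have hbw : b ≠ w := by
    rintro rfl
    exact right_not_mem_openArc hyarc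
  have hbnotarc : b ∉ openArc u w := fun hb => not_in_B hadj hb hbB
  have hbarc' : b ∈ openArc w u := (openArc_cover huw hbu hbw).resolve_left hbnotarc
  have h2 : SBtw.sbtw (fd d w) (fd d b) (fd d u) := hor2 w hw b hbB u hu hbarc'
  have h1' : SBtw.sbtw (fd d u) (fd d b) (fd d w) := hyarc
  exact sbtw_asymm h1' h2

end Dyn

section Sum

lemma vol_ne_top (A : Set S1) : volume A ≠ ⊤ := by
  refine (lt_of_le_of_lt (measure_mono (subset_univ A)) ?_).ne
  rw [AddCircle.measure_univ]
  norm_num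

lemma sum_len_eq_one {B : Set S1} (hB : B.Finite) (h2 : 2 ≤ B.ncard) {N : ℕ}
    (Hn : Fin N → Set S1) (hinj : Function.Injective Hn)
    (hholes : ∀ k, IsHole B (Hn k)) (hsurj : ∀ G, IsHole B G → ∃ k, Hn k = G) :
    ∑ k, len (Hn k) = 1 := by
  have hopen : ∀ k, MeasurableSet (Hn k) := by
    intro k
    obtain ⟨u, hu, w, hw, hne, hadj, hG⟩ := (hole_iff hB h2 _).1 (hholes k)
    rw [hG]
    exact (isOpen_openArc u w).measurableSet
  have hdisj : Pairwise (Function.onFun Disjoint Hn) := fun k l hkl =>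
    holes_disjoint (hholes k) (hholes l) (fun h => hkl (hinj h))
  have hunion : ⋃ k, Hn k = Bᶜ := by
    apply subset_antisymm
    · apply Set.iUnion_subset
      intro k
      obtain ⟨x, hx, hG⟩ := hholes k
      rw [hG]
      exact connectedComponentIn_subset _ _
    · intro x hx
      obtain ⟨k, hk⟩ := hsurj (connectedComponentIn Bᶜ x) ⟨x, hx, rfl⟩
      exact Set.mem_iUnion.2 ⟨k, hk ▸ mem_connectedComponentIn hx⟩
  have hvol : ∑' k, volume (Hn k) = 1 := by
    rw [← measure_iUnion hdisj hopen, hunion, vol_compl_finite hB]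
  rw [tsum_fintype] at hvol
  have hfin : ∀ k ∈ Finset.univ, volume (Hn k) ≠ ⊤ := fun k _ => vol_ne_top _
  have := ENNReal.toReal_sum hfin
  rw [hvol] at this
  simpa [len] using this.symm

end Sum

section NoTie

variable {d N : ℕ} {T : Set S1}

lemma Bfin (hw : Wandering d N T) (hN : 3 ≤ N) (n : ℕ) : ((fd d)^[n] '' T).Finite :=
  Set.finite_of_ncard_ne_zero (by rw [(hw n 0).1]; omega)

lemma B2 (hw : Wandering d N T) (hN : 3 ≤ N) (n : ℕ) : 2 ≤ ((fd d)^[n] '' T).ncard := by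
  rw [(hw n 0).1]; omega

lemma Bsucc (d : ℕ) (T : Set S1) (n : ℕ) :
    (fd d)^[n+1] '' T = fd d '' ((fd d)^[n] '' T) := by
  rw [Function.iterate_succ', Set.image_comp]

lemma hole_len_pos {B : Set S1} (hB : B.Finite) (h2 : 2 ≤ B.ncard) {G : Set S1}
    (hG : IsHole B G) : 0 < len G := by
  obtain ⟨u, hu, w, hwB, huw, hadj, hrep⟩ := (hole_iff hB h2 _).1 hG
  rw [hrep, len_openArc]
  exact rho_pos (Ne.symm huw)

lemma notie (hd : 2 ≤ d) (hN : 3 ≤ N) (hw : Wandering d N T)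
    (H : ℕ → Fin N → Set S1) (hH : ∀ n, IsHoleEnum ((fd d)^[n] '' T) (H n))
    (hor : ∀ n, OrientPresOn (fd d) ((fd d)^[n] '' T))
    {εT : ℝ} (hε' : εT < 1 / (3 * (d : ℝ) * N))
    (hsmall : ∀ n, len (H n ⟨N - 3, Nat.sub_lt (by omega) (by norm_num)⟩) < εT) :
    ∀ n (k k' : Fin N), k ≠ k' → len (H n k) < εT → len (H n k) ≠ len (H n k') := by
  classical
  intro n k k' hkk hlt heq
  have hd1 : (1:ℝ) < d := by exact_mod_cast hd
  have hdpos : (0:ℝ) < d := by linarith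
  have hN3 : (3:ℝ) ≤ N := by exact_mod_cast hN
  have hεpos : 0 < εT := lt_of_le_of_lt ENNReal.toReal_nonneg hlt
  have h3dN : (0:ℝ) < 3 * d * N := by positivity
  have hε'' : εT * (3 * d * N) < 1 := by
    rw [lt_div_iff₀ h3dN] at hε'
    exact hε'
  have hεd : (d:ℝ) * εT < 1 := by nlinarith
  -- one-step growth of a tied pair of small holes
  have step : ∀ m (t : ℝ), 0 < t → t < εT →
      (∃ a b : Fin N, a ≠ b ∧ len (H m a) = t ∧ len (H m b) = t) →
      (∃ a b : Fin N, a ≠ b ∧ len (H (m+1) a) = d * t ∧ len (H (m+1) b) = d * t) := by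
    intro m t ht0 htε hP
    obtain ⟨a, b, hab, ha, hb⟩ := hP
    have hfin := Bfin hw hN m
    have h2 := B2 hw hN m
    obtain ⟨hHinj, hholes, hsurj, hmono⟩ := hH m
    obtain ⟨hHinj', hholes', hsurj', hmono'⟩ := hH (m+1)
    obtain ⟨u, hu, w, hwB, huw, hadj, hrep⟩ := (hole_iff hfin h2 _).1 (hholes a)
    obtain ⟨u', hu', w', hw', huw', hadj', hrep'⟩ := (hole_iff hfin h2 _).1 (hholes b)
    rw [hrep, len_openArc] at ha
    rw [hrep', len_openArc] at hb
    have hsm : (d:ℝ) * rho u w < 1 := by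
      rw [ha]
      nlinarith
    have hsm' : (d:ℝ) * rho u' w' < 1 := by
      rw [hb]
      nlinarith
    obtain ⟨hor1, hor2⟩ := hor m
    obtain ⟨hne1, hadj1⟩ := image_adjacent hor1 hor2 hu hwB huw hadj
    obtain ⟨hne2, hadj2⟩ := image_adjacent hor1 hor2 hu' hw' huw' hadj'
    have hBeq := Bsucc d T m
    have hfin' : ((fd d)^[m+1] '' T).Finite := Bfin hw hN (m+1)
    have h2' : 2 ≤ ((fd d)^[m+1] '' T).ncard := B2 hw hN (m+1)
    have hfin'' : (fd d '' ((fd d)^[m] '' T)).Finite := hBeq ▸ hfin'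
    have h2'' : 2 ≤ (fd d '' ((fd d)^[m] '' T)).ncard := hBeq ▸ h2'
    have him : IsHole ((fd d)^[m+1] '' T) (openArc (fd d u) (fd d w)) := by
      rw [hBeq]
      exact (hole_iff hfin'' h2'' _).2 ⟨fd d u, mem_image_of_mem _ hu, fd d w,
        mem_image_of_mem _ hwB, hne1, hadj1, rfl⟩
    have him' : IsHole ((fd d)^[m+1] '' T) (openArc (fd d u') (fd d w')) := by
      rw [hBeq]
      exact (hole_iff hfin'' h2'' _).2 ⟨fd d u', mem_image_of_mem _ hu', fd d w',
        mem_image_of_mem _ hw', hne2, hadj2, rfl⟩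
    obtain ⟨j, hj⟩ := hsurj' _ him
    obtain ⟨j', hj'⟩ := hsurj' _ him'
    have hjj : j ≠ j' := by
      intro hcon
      rw [hcon, hj'] at hj
      obtain ⟨he1, he2⟩ := openArc_inj hne2 hj
      have huu : u' = u := hor1 hu' hu he1
      have hww : w' = w := hor1 hw' hwB he2
      apply hab
      apply hHinj
      rw [hrep, hrep', huu, hww]
    have hlj : len (H (m+1) j) = d * t := by
      rw [hj, len_openArc, rho_fd hsm, ha]
    have hlj' : len (H (m+1) j') = d * t := by
      rw [hj', len_openArc, rho_fd hsm', hb]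
    exact ⟨j, j', hjj, hlj, hlj'⟩
  -- initial tie
  have ht0 : 0 < len (H n k) :=
    hole_len_pos (Bfin hw hN n) (B2 hw hN n) ((hH n).2.1 k)
  set t := len (H n k) with htdef
  have hex : ∃ m, εT ≤ (d:ℝ)^m * t := by
    obtain ⟨m, hm⟩ := pow_unbounded_of_one_lt (εT / t) hd1
    refine ⟨m, ?_⟩
    rw [div_lt_iff₀ ht0] at hm
    linarith
  have hgrow : ∀ m, (∀ m' < m, (d:ℝ)^m' * t < εT) →
      ∃ a b : Fin N, a ≠ b ∧ len (H (n + m) a) = (d:ℝ)^m * t ∧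
        len (H (n + m) b) = (d:ℝ)^m * t := by
    intro m
    induction m with
    | zero =>
      intro _
      exact ⟨k, k', hkk, by simp [htdef], by simp [← heq]⟩
    | succ m ih =>
      intro hsm
      have h1 := ih (fun m' hm' => hsm m' (by omega))
      have h2 : 0 < (d:ℝ)^m * t := by positivity
      have h3 : (d:ℝ)^m * t < εT := hsm m (by omega)
      have h4 := step (n+m) _ h2 h3 h1
      rw [show (d:ℝ) * ((d:ℝ)^m * t) = (d:ℝ)^(m+1) * t by ring] at h4
      rw [show n + (m+1) = (n+m)+1 by omega]
      exact h4
  have hm₀ := Nat.find_spec hex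
  have hmin : ∀ m' < Nat.find hex, (d:ℝ)^m' * t < εT :=
    fun m' hm' => lt_of_not_ge (Nat.find_min hex hm')
  have hm₀pos : 0 < Nat.find hex := by
    rcases Nat.eq_zero_or_pos (Nat.find hex) with h | h
    · exfalso
      rw [h, pow_zero, one_mul] at hm₀
      linarith
    · exact h
  obtain ⟨a, b, hab, ha, hb⟩ := hgrow (Nat.find hex) hmin
  set ν := n + Nat.find hex with hν
  set L := (d:ℝ)^(Nat.find hex) * t with hL
  have hLε : εT ≤ L := hm₀
  have hLd : L < d * εT := by
    have h1 := hmin (Nat.find hex - 1) (by omega)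
    have h2 : L = d * ((d:ℝ)^(Nat.find hex - 1) * t) := by
      rw [hL]
      conv_lhs => rw [← Nat.succ_pred_eq_of_pos hm₀pos]
      rw [pow_succ, Nat.pred_eq_sub_one]
      ring
    rw [h2]
    exact mul_lt_mul_of_pos_left h1 hdpos
  obtain ⟨hinj, hholes, hsurj, hmono⟩ := hH ν
  have htop : ∀ c : Fin N, len (H ν c) = L → N - 2 ≤ (c:ℕ) := by
    intro c hc
    by_contra hcon
    push_neg at hcon
    have hle : c ≤ (⟨N-3, by omega⟩ : Fin N) := by
      rw [Fin.le_def]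
      simp only []
      omega
    have h5 := hmono c _ hle
    rw [hc] at h5
    have h6 := hsmall ν
    linarith
  have hAv := htop a ha
  have hBv := htop b hb
  have hsum := sum_len_eq_one (Bfin hw hN ν) (B2 hw hN ν) (H ν) hinj hholes hsurj
  have habf : ({a, b} : Finset (Fin N)).card = 2 := by
    rw [Finset.card_insert_of_notMem (by simpa using hab), Finset.card_singleton]
  have hcompl : (Finset.univ \ ({a, b} : Finset (Fin N))).card = N - 2 := by
    rw [Finset.card_sdiff_of_subset (Finset.subset_univ _), Finset.card_univ, Fintype.card_fin, habf]
  have hsplit : ∑ c, len (H ν c) =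
      ∑ c ∈ Finset.univ \ ({a, b} : Finset (Fin N)), len (H ν c) + (len (H ν a) + len (H ν b)) := by
    rw [← Finset.sum_sdiff (Finset.subset_univ ({a, b} : Finset (Fin N))), Finset.sum_pair hab]
  have hothers : ∑ c ∈ Finset.univ \ ({a, b} : Finset (Fin N)), len (H ν c) <
      ((N - 2 : ℕ) : ℝ) * εT := by
    have hne : (Finset.univ \ ({a, b} : Finset (Fin N))).Nonempty := by
      rw [← Finset.card_pos, hcompl]
      omega
    have hbound := Finset.sum_lt_sum_of_nonempty hne (f := fun c => len (H ν c))
      (g := fun _ => εT) ?_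
    · rw [Finset.sum_const, hcompl, nsmul_eq_mul] at hbound
      exact hbound
    · intro c hc
      have hc' : c ≠ a ∧ c ≠ b := by
        have := (Finset.mem_sdiff.1 hc).2
        simp only [Finset.mem_insert, Finset.mem_singleton] at this
        tauto
    
      have hcv : (c:ℕ) + 3 ≤ N := by
        by_contra hcc
        push_neg at hcc
        have h7 : (a:ℕ) ≠ (b:ℕ) := fun h => hab (Fin.ext h)
        have h8 : (c:ℕ) ≠ (a:ℕ) := fun h => hc'.1 (Fin.ext h)
        have h9 : (c:ℕ) ≠ (b:ℕ) := fun h => hc'.2 (Fin.ext h)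
        have := a.isLt
        have := b.isLt
        have := c.isLt
        omega
      have hle : c ≤ (⟨N-3, by omega⟩ : Fin N) := by
        rw [Fin.le_def]
        simp only []
        omega
      exact lt_of_le_of_lt (hmono c _ hle) (hsmall ν)
  rw [hsplit, ha, hb] at hsum
  have hNc : ((N - 2 : ℕ) : ℝ) = (N:ℝ) - 2 := by
    have : (2:ℕ) ≤ N := by omega
    exact Nat.cast_sub this
  rw [hNc] at hothers
  nlinarith

end NoTie

end St16

open St16

/-- if i is not a jump (d·s_{N-2}(T_i) ≤ s_{N-2}(T_{i+1})), then the
image-hole of each of the N-2 smallest holes of T_i is the hole of the same index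
in T_{i+1}. -/
theorem stmt16 (d N i : ℕ) (hd : 2 ≤ d) (hN : 3 ≤ N) (T : Set S1)
    (hw : Wandering d N T)
    (H : ℕ → Fin N → Set S1)
    (hH : ∀ n, IsHoleEnum ((fd d)^[n] '' T) (H n))
    (hor : ∀ n, OrientPresOn (fd d) ((fd d)^[n] '' T))
    (εT : ℝ) (hε : 0 < εT) (hε' : εT < 1 / (3 * (d : ℝ) * N))
    (hsmall : ∀ n, len (H n ⟨N - 3, by omega⟩) < εT)
    (hnotjump : (d : ℝ) * len (H i ⟨N - 3, by omega⟩) ≤ len (H (i + 1) ⟨N - 3, by omega⟩)) :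
    ∀ k : Fin N, (k : ℕ) < N - 2 → ImageHoleRel (fd d) (H i k) (H (i + 1) k) := by
  classical
  intro k hk
  -- numeric facts
  have hd1 : (1:ℝ) < d := by exact_mod_cast hd
  have hdpos : (0:ℝ) < d := by linarith
  have hN3 : (3:ℝ) ≤ N := by exact_mod_cast hN
  have h3dN : (0:ℝ) < 3 * d * N := by positivity
  have hε'' : εT * (3 * d * N) < 1 := by rw [lt_div_iff₀ h3dN] at hε'; exact hε'
  have hεd : (d:ℝ) * εT < 1 := by nlinarith
  -- structures at times i and i+1
  have hfin := Bfin hw hN i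
  have h2 := B2 hw hN i
  have hfin' := Bfin hw hN (i+1)
  have h2' := B2 hw hN (i+1)
  obtain ⟨hinj, hholes, hsurj, hmono⟩ := hH i
  obtain ⟨hinj', hholes', hsurj', hmono'⟩ := hH (i+1)
  obtain ⟨hor1, hor2⟩ := hor i
  have hBeq := Bsucc d T i
  have hfin'' : (fd d '' ((fd d)^[i] '' T)).Finite := hBeq ▸ hfin'
  have h2'' : 2 ≤ (fd d '' ((fd d)^[i] '' T)).ncard := hBeq ▸ h2'
  -- endpoint data for every hole of B_i
  have hdata : ∀ c : Fin N, ∃ u w : S1, u ∈ (fd d)^[i] '' T ∧ w ∈ (fd d)^[i] '' T ∧ u ≠ w ∧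
      openArc u w ∩ ((fd d)^[i] '' T) = ∅ ∧ H i c = openArc u w := by
    intro c
    obtain ⟨u, hu, w, hwB, huw, hadj, hrep⟩ := (hole_iff hfin h2 _).1 (hholes c)
    exact ⟨u, w, hu, hwB, huw, hadj, hrep⟩
  choose u w hu hwB huw hadj hrep using hdata
  -- image holes and the index map σ
  have himadj := fun c => image_adjacent hor1 hor2 (hu c) (hwB c) (huw c) (hadj c)
  have him : ∀ c, IsHole ((fd d)^[i+1] '' T) (openArc (fd d (u c)) (fd d (w c))) := by
    intro c
    rw [hBeq]
    exact (hole_iff hfin'' h2'' _).2 ⟨fd d (u c), mem_image_of_mem _ (hu c), fd d (w c),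
      mem_image_of_mem _ (hwB c), (himadj c).1, (himadj c).2, rfl⟩
  have hσex : ∀ c, ∃ j, H (i+1) j = openArc (fd d (u c)) (fd d (w c)) :=
    fun c => hsurj' _ (him c)
  choose σ hσ using hσex
  have hσinj : Function.Injective σ := by
    intro c c' hcc
    have harc : openArc (fd d (u c)) (fd d (w c)) = openArc (fd d (u c')) (fd d (w c')) :=
      (hσ c).symm.trans (hcc ▸ hσ c')
    obtain ⟨e1, e2⟩ := openArc_inj (himadj c).1 harc
    have eu : u c = u c' := hor1 (hu c) (hu c') e1
    have ew : w c = w c' := hor1 (hwB c) (hwB c') e2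
    apply hinj
    rw [hrep c, hrep c', eu, ew]
  -- lengths
  have hℓ : ∀ c, len (H i c) = rho (u c) (w c) := fun c => by rw [hrep c, len_openArc]
  have hsm : ∀ c : Fin N, (c:ℕ) + 3 ≤ N → len (H i c) < εT := by
    intro c hc
    refine lt_of_le_of_lt (hmono c ⟨N-3, by omega⟩ ?_) (hsmall i)
    rw [Fin.le_def]
    simp only []
    omega
  have hmσ : ∀ c : Fin N, (c:ℕ) + 3 ≤ N →
      len (H (i+1) (σ c)) = d * len (H i c) := by
    intro c hc
    have h0 : 0 ≤ len (H i c) := ENNReal.toReal_nonneg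
    have h1 : (d:ℝ) * rho (u c) (w c) < 1 := by
      rw [← hℓ c]
      nlinarith [hsm c hc]
    rw [hσ c, len_openArc, rho_fd h1, ← hℓ c]
  -- σ preserves the small block
  have hσsmall : ∀ c : Fin N, (c:ℕ) + 3 ≤ N → (σ c : ℕ) + 3 ≤ N := by
    intro c hc
    by_contra hcon
    push_neg at hcon
    have e1 := hmσ c hc
    have e2 : len (H i c) ≤ len (H i ⟨N-3, by omega⟩) := by
      refine hmono c _ ?_
      rw [Fin.le_def]
      simp only []
      omega
    have e3 : (d:ℝ) * len (H i c) ≤ (d:ℝ) * len (H i ⟨N-3, by omega⟩) :=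
      mul_le_mul_of_nonneg_left e2 hdpos.le
    have e5 : len (H (i+1) ⟨N-3, by omega⟩) ≤ len (H (i+1) (σ c)) := by
      refine hmono' _ (σ c) ?_
      rw [Fin.le_def]
      have := (σ c).isLt
      simp only []
      omega
    have e6 : len (H (i+1) ⟨N-3, by omega⟩) = len (H (i+1) (σ c)) :=
      le_antisymm e5 (by linarith)
    have hne : (⟨N-3, by omega⟩ : Fin N) ≠ σ c := by
      intro hcon2
      have : N - 3 = (σ c : ℕ) := congrArg Fin.val hcon2
      omega
    exact notie hd hN hw H hH hor hε' hsmall (i+1) ⟨N-3, by omega⟩ (σ c) hne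
      (hsmall (i+1)) e6
  -- σ is strictly monotone on the small block
  have hstrict : ∀ c c' : Fin N, (c':ℕ) + 3 ≤ N → c < c' → σ c < σ c' := by
    intro c c' hc' hlt
    have hc : (c:ℕ) + 3 ≤ N := by
      have := (Fin.lt_def).1 hlt
      omega
    have hne : len (H i c) ≠ len (H i c') :=
      notie hd hN hw H hH hor hε' hsmall i c c' (ne_of_lt hlt) (hsm c hc)
    have hℓlt : len (H i c) < len (H i c') := lt_of_le_of_ne (hmono c c' hlt.le) hne
    have hmlt : len (H (i+1) (σ c)) < len (H (i+1) (σ c')) := by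
      rw [hmσ c hc, hmσ c' hc']
      exact mul_lt_mul_of_pos_left hℓlt hdpos
    by_contra hcon
    push_neg at hcon
    have := hmono' (σ c') (σ c) hcon
    linarith
  -- the restriction of σ to the small block is the identity
  have hσk : σ k = k := by
    set M := N - 2 with hM
    have hkM : (k:ℕ) < M := hk
    have hemb : ∀ x : Fin M, ((x:ℕ) + 3 ≤ N) := by
      intro x
      have := x.isLt
      omega
    let g : Fin M → Fin M := fun x =>
      ⟨(σ ⟨x.val, by have := x.isLt; omega⟩).val, by
        have := hσsmall ⟨x.val, by have := x.isLt; omega⟩ (hemb x)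
        omega⟩
    have hgmono : StrictMono g := by
      intro x y hxy
      have h1 : (⟨x.val, by have := x.isLt; omega⟩ : Fin N) < ⟨y.val, by have := y.isLt; omega⟩ := by
        rw [Fin.lt_def]
        exact hxy
      have h2 := hstrict _ _ (hemb y) h1
      rw [Fin.lt_def]
      exact h2
    have hgid : ∀ x, g x = x := by
      intro x
      have i1 : WellFoundedLT (Fin M) := inferInstance
      have i2 : WellFoundedGT (Fin M) := inferInstance
      exact le_antisymm (@StrictMono.apply_le (Fin M) _ i2 g hgmono x)
        (@StrictMono.le_apply (Fin M) _ i1 g hgmono x)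
    have hgk := hgid ⟨k.val, hkM⟩
    have hval := congrArg Fin.val hgk
    exact Fin.ext hval
  refine ⟨u k, w k, huw k, hrep k, ?_⟩
  have hfin2 := hσ k
  rw [hσk] at hfin2
  exact hfin2
end
end

section
/- Let T form a wandering N-gon under f(z) = z^d. Suppose (i_n) is a strictly increasing sequence of non-negative integers such that CH(T_{i_n}) converges (Hausdorff) to a chord p, and (x_n) is a sequence of points of S^1 such that x_n lies in one of the N−2 smallest holes of T_{i_n} for every n. Then the set of limit points of (x_n) is a non-empty subset of p ∩ S^1. -/
open MeasureTheory Set Metric Filter Topology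

noncomputable section

namespace Stmt17Aux

open AddCircle

/-! ### Basic facts about `S1` -/

instance : LocallyConnectedSpace S1 := by
  apply locallyConnectedSpace_of_connected_bases
    (fun (_ : S1) (s : Set ℝ) => (QuotientAddGroup.mk '' s : Set S1))
    (fun (x : S1) (s : Set ℝ) => IsOpen s ∧ Quotient.out x ∈ s ∧ IsConnected s)
  · intro x
    have h1 := (QuotientAddGroup.isOpenQuotientMap_mk
      (G := ℝ) (N := AddSubgroup.zmultiples 1)).map_nhds_eq (Quotient.out x)
    rw [QuotientAddGroup.out_eq' x] at h1
    rw [← h1]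
    exact (LocallyConnectedSpace.open_connected_basis (Quotient.out x)).map _
  · rintro x s ⟨-, -, hs⟩
    exact hs.isPreconnected.image _ continuous_quotient_mk'.continuousOn

lemma norm_coe_eq (s : ℝ) : ‖((s : ℝ) : S1)‖ = |s - round s| := by
  rw [AddCircle.norm_eq]; norm_num

lemma norm_coe_le_abs (s : ℝ) : ‖((s : ℝ) : S1)‖ ≤ |s| := by
  rw [norm_coe_eq]
  simpa using round_le s 0

lemma coe_sub_one (s : ℝ) : ((s - 1 : ℝ) : S1) = ((s : ℝ) : S1) := by
  have := AddCircle.coe_add_period 1 (s - 1)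
  simpa using this

lemma norm_coe_ge {s ε : ℝ} (hε : 0 < ε) (h0 : ε ≤ s) (h1 : s ≤ 1 - ε) :
    ε ≤ ‖((s : ℝ) : S1)‖ := by
  rw [norm_coe_eq, abs_sub_round_eq_min]
  have hf : Int.fract s = s := Int.fract_eq_self.mpr ⟨by linarith, by linarith⟩
  rw [hf]
  exact le_min h0 (by linarith)

/-! ### Facts about `emb` and chords -/

lemma continuous_emb : Continuous emb :=
  continuous_subtype_val.comp AddCircle.continuous_toCircle

lemma emb_injective : Function.Injective emb := fun x y h =>
  AddCircle.injective_toCircle one_ne_zero (Subtype.ext h)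

lemma norm_emb (x : S1) : ‖emb x‖ = 1 := by
  exact Circle.norm_coe _

lemma emb_mem_closedBall (x : S1) : emb x ∈ Metric.closedBall (0 : ℂ) 1 := by
  simp [Metric.mem_closedBall, dist_eq_norm, norm_emb x]

lemma isCompact_chord (a b : S1) : IsCompact (chord a b) := by
  rw [chord, segment_eq_image ℝ]
  exact isCompact_Icc.image (by fun_prop)

lemma chord_nonempty (a b : S1) : (chord a b).Nonempty :=
  ⟨emb a, left_mem_segment ℝ _ _⟩

lemma chord_bounded (a b : S1) : Bornology.IsBounded (chord a b) :=
  (isCompact_chord a b).isBounded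

lemma mem_chord_imp {a b x : S1} (h : emb x ∈ chord a b) : x = a ∨ x = b := by
  by_cases hab : emb a = emb b
  · right
    apply emb_injective
    rw [chord, hab, segment_same] at h
    simpa using h
  · rw [chord, ← insert_endpoints_openSegment] at h
    rcases h with h | h | h
    · exact Or.inl (emb_injective h)
    · exact Or.inr (emb_injective h)
    · exfalso
      have hsub := (strictConvex_closedBall ℝ (0:ℂ) 1).openSegment_subset
        (emb_mem_closedBall a) (emb_mem_closedBall b) hab
      have hx := hsub h
      rw [interior_closedBall (0:ℂ) one_ne_zero] at hx
      rw [Metric.mem_ball, dist_eq_norm, sub_zero, norm_emb] at hx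
      exact lt_irrefl 1 hx

lemma exists_delta (a b : S1) {ε : ℝ} (hε : 0 < ε) :
    ∃ δ > 0, ∀ x : S1, Metric.infDist (emb x) (chord a b) ≤ δ →
      dist x a < ε ∨ dist x b < ε := by
  set K := {x : S1 | ε ≤ dist x a} ∩ {x : S1 | ε ≤ dist x b} with hK
  by_cases hKne : K.Nonempty
  · have hKcl : IsClosed K := by
      apply IsClosed.inter
      · exact isClosed_le continuous_const (Continuous.dist continuous_id continuous_const)
      · exact isClosed_le continuous_const (Continuous.dist continuous_id continuous_const)
    have hgc : Continuous (fun z : S1 => Metric.infDist (emb z) (chord a b)) :=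
      (Metric.continuous_infDist_pt _).comp continuous_emb
    obtain ⟨x0, hx0K, hx0min⟩ := hKcl.isCompact.exists_isMinOn hKne hgc.continuousOn
    have hpos : 0 < Metric.infDist (emb x0) (chord a b) := by
      rcases (Metric.infDist_nonneg (s := chord a b) (x := emb x0)).lt_or_eq with h | h
      · exact h
      · exfalso
        have hmem : emb x0 ∈ chord a b := by
          rw [(isCompact_chord a b).isClosed.mem_iff_infDist_zero (chord_nonempty a b)]
          exact h.symm
        rcases mem_chord_imp hmem with rfl | rfl
        · have := hx0K.1
          simp only [mem_setOf_eq, dist_self] at this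
          linarith
        · have := hx0K.2
          simp only [mem_setOf_eq, dist_self] at this
          linarith
    refine ⟨Metric.infDist (emb x0) (chord a b) / 2, half_pos hpos, fun x hx => ?_⟩
    by_contra hcon
    push_neg at hcon
    have hxK : x ∈ K := ⟨hcon.1, hcon.2⟩
    have h2 : Metric.infDist (emb x0) (chord a b) ≤ Metric.infDist (emb x) (chord a b) :=
      isMinOn_iff.mp hx0min x hxK
    linarith
  · refine ⟨1, one_pos, fun x _ => ?_⟩
    by_contra hcon
    push_neg at hcon
    exact hKne ⟨x, hcon.1, hcon.2⟩

/-! ### Holes -/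

lemma hole_eq_component {B G : Set S1} (hG : IsHole B G) {z : S1} (hz : z ∈ G) :
    G = connectedComponentIn Bᶜ z := by
  obtain ⟨w, _, rfl⟩ := hG
  exact connectedComponentIn_eq hz

lemma holes_disjoint {B G G' : Set S1} (hG : IsHole B G) (hG' : IsHole B G')
    (hne : G ≠ G') : Disjoint G G' := by
  rw [Set.disjoint_left]
  intro z hz hz'
  exact hne ((hole_eq_component hG hz).trans (hole_eq_component hG' hz').symm)

lemma hole_isOpen {B : Set S1} (hB : B.Finite) {G : Set S1} (hG : IsHole B G) :
    IsOpen G := by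
  obtain ⟨w, _, rfl⟩ := hG
  exact hB.isClosed.isOpen_compl.connectedComponentIn

lemma volume_S1 : volume (Set.univ : Set S1) = 1 := by
  rw [AddCircle.measure_univ]
  simp

lemma three_lens {N : ℕ} {B : Set S1} (hBfin : B.Finite) {H : Fin N → Set S1}
    (hHE : IsHoleEnum B H) {i j l : Fin N} (hij : i ≠ j) (hil : i ≠ l) (hjl : j ≠ l) :
    len (H i) + len (H j) + len (H l) ≤ 1 := by
  obtain ⟨hinj, hhole, -, -⟩ := hHE
  have hms : ∀ m : Fin N, MeasurableSet (H m) := fun m =>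
    (hole_isOpen hBfin (hhole m)).measurableSet
  have hdisj : ∀ m m' : Fin N, m ≠ m' → Disjoint (H m) (H m') := fun m m' h =>
    holes_disjoint (hhole m) (hhole m') (fun e => h (hinj e))
  have hU : volume (H i ∪ H j ∪ H l) = volume (H i) + volume (H j) + volume (H l) := by
    rw [measure_union (Set.disjoint_union_left.mpr ⟨hdisj i l hil, hdisj j l hjl⟩) (hms l),
      measure_union (hdisj i j hij) (hms j)]
  have hle : volume (H i ∪ H j ∪ H l) ≤ 1 := by
    rw [← volume_S1]
    exact measure_mono (Set.subset_univ _)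
  have h1 : volume (H i) ≠ ⊤ := measure_ne_top _ _
  have h2 : volume (H j) ≠ ⊤ := measure_ne_top _ _
  have h3 : volume (H l) ≠ ⊤ := measure_ne_top _ _
  have := ENNReal.toReal_mono ENNReal.one_ne_top (hU ▸ hle)
  rw [ENNReal.toReal_one, ENNReal.toReal_add (by finiteness) h3,
    ENNReal.toReal_add h1 h2] at this
  exact this

lemma len_ge {G J : Set S1} (hJG : J ⊆ G) {c : ℝ} (hc : ENNReal.ofReal c ≤ volume J) :
    c ≤ len G := by
  rcases le_or_gt c 0 with h | h
  · exact h.trans ENNReal.toReal_nonneg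
  · have h1 : ENNReal.ofReal c ≤ volume G := hc.trans (measure_mono hJG)
    have := ENNReal.toReal_mono (measure_ne_top _ _) h1
    rwa [ENNReal.toReal_ofReal h.le] at this

lemma arc_volume_ge {u v : ℝ} (h : v ≤ u + 1) :
    ENNReal.ofReal (v - u) ≤ volume (((↑) : ℝ → S1) '' Set.Icc u v) := by
  rcases le_or_gt v u with h' | h'
  · rw [ENNReal.ofReal_eq_zero.mpr (by linarith)]
    exact zero_le
  · have hm : MeasurableSet (((↑) : ℝ → S1) '' Set.Icc u v) :=
      (isCompact_Icc.image (AddCircle.continuous_mk' 1)).isClosed.measurableSet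
    have hp := (AddCircle.measurePreserving_mk (1:ℝ) u).measure_preimage
      hm.nullMeasurableSet
    rw [← hp, Measure.restrict_apply' measurableSet_Ioc]
    calc ENNReal.ofReal (v - u) = volume (Set.Ioc u v) := by rw [Real.volume_Ioc]
      _ ≤ volume ((((↑) : ℝ → S1) ⁻¹' (((↑) : ℝ → S1) '' Set.Icc u v)) ∩ Set.Ioc u (u + 1)) := by
          apply measure_mono
          intro t ht
          exact ⟨Set.subset_preimage_image _ _ (Set.mem_Icc.mpr ⟨ht.1.le, ht.2⟩),
            ht.1, ht.2.trans h⟩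

lemma holes_clash {N : ℕ} (hN : 3 ≤ N) {B : Set S1} (hBfin : B.Finite)
    {H : Fin N → Set S1} (hHE : IsHoleEnum B H) {k : Fin N} (hk : (k : ℕ) < N - 2)
    {J1 J2 : Set S1} (h1c : IsPreconnected J1) (h2c : IsPreconnected J2)
    (h1B : J1 ⊆ Bᶜ) (h2B : J2 ⊆ Bᶜ) (h2ne : J2.Nonempty)
    {z : S1} (hz1 : z ∈ J1) (hzk : z ∈ H k)
    {c1 c2 : ℝ} (hvol1 : ENNReal.ofReal c1 ≤ volume J1)
    (hvol2 : ENNReal.ofReal c2 ≤ volume J2)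
    (hs1 : 1 < 2 * c1 + c2) (hs2 : 1 < 3 * max c1 c2) : False := by
  obtain ⟨hinj, hhole, hsurj, hmono⟩ := hHE
  set k2 : Fin N := ⟨N - 2, by omega⟩ with hk2def
  set k3 : Fin N := ⟨N - 1, by omega⟩ with hk3def
  have hkk2 : k ≠ k2 := by
    intro h; rw [Fin.ext_iff] at h; simp [hk2def] at h; omega
  have hkk3 : k ≠ k3 := by
    intro h; rw [Fin.ext_iff] at h; simp [hk3def] at h; omega
  have hk2k3 : k2 ≠ k3 := by
    intro h; rw [Fin.ext_iff] at h; simp [hk2def, hk3def] at h; omega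
  -- J1 is inside H k
  have hHkz : H k = connectedComponentIn Bᶜ z := hole_eq_component (hhole k) hzk
  have hJ1k : J1 ⊆ H k := by
    rw [hHkz]
    exact h1c.subset_connectedComponentIn hz1 h1B
  have len1 : c1 ≤ len (H k) := len_ge hJ1k hvol1
  -- J2 is inside some hole H m
  obtain ⟨w, hw⟩ := h2ne
  have hGhole : IsHole B (connectedComponentIn Bᶜ w) := ⟨w, h2B hw, rfl⟩
  obtain ⟨m, hm⟩ := hsurj _ hGhole
  have hJ2m : J2 ⊆ H m := by
    rw [hm]
    exact h2c.subset_connectedComponentIn hw h2B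
  have len2 : c2 ≤ len (H m) := len_ge hJ2m hvol2
  -- monotonicity
  have hmono1 : len (H k) ≤ len (H k2) := by
    apply hmono; rw [Fin.le_def]; simp [hk2def]; omega
  have hmono2 : len (H k2) ≤ len (H k3) := by
    apply hmono; rw [Fin.le_def]; simp [hk2def, hk3def]; omega
  have h3l : len (H k) + len (H k2) + len (H k3) ≤ 1 :=
    three_lens hBfin ⟨hinj, hhole, hsurj, hmono⟩ hkk2 hkk3 hk2k3
  by_cases hmk : m = k
  · have len2' : c2 ≤ len (H k) := hmk ▸ len2
    have hmax : max c1 c2 ≤ len (H k) := max_le len1 len2'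
    rcases max_cases c1 c2 with ⟨he, -⟩ | ⟨he, -⟩ <;> rw [he] at hs2 hmax <;> linarith
  · by_cases hmk2 : m = k2
    · have len2' : c2 ≤ len (H k2) := hmk2 ▸ len2
      linarith
    · by_cases hmk3 : m = k3
      · have len2' : c2 ≤ len (H k3) := hmk3 ▸ len2
        linarith
      · have h3l' : len (H k2) + len (H k3) + len (H m) ≤ 1 :=
          three_lens hBfin ⟨hinj, hhole, hsurj, hmono⟩ hk2k3
            (fun h => hmk2 h.symm) (fun h => hmk3 h.symm)
        linarith

lemma small_hole_near {N : ℕ} (hN : 3 ≤ N) {B : Set S1} (hB : B.ncard = N)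
    {H : Fin N → Set S1} (hHE : IsHoleEnum B H) (a b : S1) {ε : ℝ} (hε : 0 < ε)
    (hε' : ε < 1 / 100) (hvert : ∀ v ∈ B, dist v a < ε ∨ dist v b < ε)
    {k : Fin N} (hk : (k : ℕ) < N - 2) {z : S1} (hz : z ∈ H k) :
    dist z a ≤ 7 * ε ∨ dist z b ≤ 7 * ε := by
  have hBfin : B.Finite := B.finite_of_ncard_ne_zero (by omega)
  by_contra hcon
  push_neg at hcon
  obtain ⟨h7a, h7b⟩ := hcon
  obtain ⟨α, hαmem, hα⟩ := AddCircle.eq_coe_Ico a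
  obtain ⟨γ, hγmem, hγ⟩ := AddCircle.eq_coe_Ico (b - a)
  obtain ⟨t, htmem, ht⟩ := AddCircle.eq_coe_Ico (z - a)
  obtain ⟨hγ0, hγ1⟩ := hγmem
  obtain ⟨ht0, ht1⟩ := htmem
  -- distance formulas
  have hda : dist z a = ‖((t : ℝ) : S1)‖ := by
    rw [dist_eq_norm, ← ht]
  have hdb : dist z b = ‖((t - γ : ℝ) : S1)‖ := by
    rw [dist_eq_norm]
    congr 1
    rw [AddCircle.coe_sub, ht, hγ]
    abel
  -- bounds on t
  have ht7 : 7 * ε < t := by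
    have h1 : ‖((t : ℝ) : S1)‖ ≤ |t| := norm_coe_le_abs t
    rw [abs_of_nonneg ht0] at h1
    rw [hda] at h7a
    linarith
  have ht7' : t < 1 - 7 * ε := by
    have h1 : ‖((t - 1 : ℝ) : S1)‖ ≤ |t - 1| := norm_coe_le_abs (t - 1)
    rw [coe_sub_one, abs_of_nonpos (by linarith)] at h1
    rw [hda] at h7a
    linarith
  -- vertices are not on the middle arcs
  have keyB : ∀ s : ℝ, ((ε ≤ s - α ∧ s - α ≤ γ - ε) ∨ (γ + ε ≤ s - α ∧ s - α ≤ 1 - ε)) →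
      ((s : ℝ) : S1) ∉ B := by
    intro s hs hsB
    have hub : s - α ≤ 1 - ε := by
      rcases hs with ⟨h1, h2⟩ | ⟨h1, h2⟩ <;> linarith
    have h1 : ε ≤ dist ((s : ℝ) : S1) a := by
      rw [dist_eq_norm, ← hα, ← AddCircle.coe_sub]
      apply norm_coe_ge hε
      · rcases hs with ⟨h1, h2⟩ | ⟨h1, h2⟩ <;> linarith
      · exact hub
    have h2 : ε ≤ dist ((s : ℝ) : S1) b := by
      rw [dist_eq_norm]
      have heq : ((s : ℝ) : S1) - b = ((s - α - γ : ℝ) : S1) := by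
        rw [AddCircle.coe_sub, AddCircle.coe_sub, hα, hγ]
        abel
      rw [heq]
      rcases hs with ⟨hs1, hs2⟩ | ⟨hs1, hs2⟩
      · have hco : ((s - α - γ : ℝ) : S1) = ((s - α - γ + 1 : ℝ) : S1) := by
          rw [← coe_sub_one (s - α - γ + 1)]
          norm_num
        rw [hco]
        exact norm_coe_ge hε (by linarith) (by linarith)
      · exact norm_coe_ge hε (by linarith) (by linarith)
    rcases hvert _ hsB with h | h
    · exact absurd h1 (by linarith)
    · exact absurd h2 (by linarith)
  by_cases hγcase : γ ≤ 6 * ε ∨ 1 - 6 * ε ≤ γ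
  · -- a and b are close together: one long arc avoiding both
    have hdab : dist a b ≤ 6 * ε := by
      have : dist a b = ‖((γ : ℝ) : S1)‖ := by
        rw [dist_comm, dist_eq_norm, ← hγ]
      rcases hγcase with h | h
      · rw [this]
        have := norm_coe_le_abs γ
        rw [abs_of_nonneg hγ0] at this
        linarith
      · rw [this, ← coe_sub_one γ]
        have := norm_coe_le_abs (γ - 1)
        rw [abs_of_nonpos (by linarith)] at this
        linarith
    have keyA : ∀ s : ℝ, 7 * ε ≤ s - α → s - α ≤ 1 - 7 * ε → ((s : ℝ) : S1) ∉ B := by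
      intro s hs1 hs2 hsB
      have h1 : 7 * ε ≤ dist ((s : ℝ) : S1) a := by
        rw [dist_eq_norm, ← hα, ← AddCircle.coe_sub]
        exact norm_coe_ge (by linarith) hs1 hs2
      rcases hvert _ hsB with h | h
      · linarith
      · have : dist ((s : ℝ) : S1) a ≤ dist ((s : ℝ) : S1) b + dist b a := dist_triangle _ _ _
        rw [dist_comm b a] at this
        linarith
    -- the long arc J
    set J : Set S1 := ((↑) : ℝ → S1) '' Set.Icc (α + 7 * ε) (α + 1 - 7 * ε) with hJdef
    have hJB : J ⊆ Bᶜ := by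
      rintro - ⟨s, hs, rfl⟩
      exact keyA s (by linarith [hs.1]) (by linarith [hs.2])
    have hzJ : z ∈ J := by
      refine ⟨α + t, ⟨by linarith, by linarith⟩, ?_⟩
      rw [AddCircle.coe_add, hα, ht]
      abel
    have hJconn : IsPreconnected J :=
      isPreconnected_Icc.image _ (AddCircle.continuous_mk' 1).continuousOn
    have hJk : J ⊆ H k := by
      rw [hole_eq_component ((hHE.2.1) k) hz]
      exact hJconn.subset_connectedComponentIn hzJ hJB
    have hvolJ : ENNReal.ofReal (1 - 14 * ε) ≤ volume J := by
      have := arc_volume_ge (u := α + 7 * ε) (v := α + 1 - 7 * ε) (by linarith)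
      convert this using 2
      ring
    have hlen1 : 1 - 14 * ε ≤ len (H k) := len_ge hJk hvolJ
    obtain ⟨hinj, hhole, hsurj, hmono⟩ := hHE
    set k2 : Fin N := ⟨N - 2, by omega⟩ with hk2def
    set k3 : Fin N := ⟨N - 1, by omega⟩ with hk3def
    have hkk2 : k ≠ k2 := by
      intro h; rw [Fin.ext_iff] at h; simp [hk2def] at h; omega
    have hkk3 : k ≠ k3 := by
      intro h; rw [Fin.ext_iff] at h; simp [hk3def] at h; omega
    have hk2k3 : k2 ≠ k3 := by
      intro h; rw [Fin.ext_iff] at h; simp [hk2def, hk3def] at h; omega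
    have hmono1 : len (H k) ≤ len (H k2) := by
      apply hmono; rw [Fin.le_def]; simp [hk2def]; omega
    have hmono2 : len (H k2) ≤ len (H k3) := by
      apply hmono; rw [Fin.le_def]; simp [hk2def, hk3def]; omega
    have h3l : len (H k) + len (H k2) + len (H k3) ≤ 1 :=
      three_lens hBfin ⟨hinj, hhole, hsurj, hmono⟩ hkk2 hkk3 hk2k3
    linarith
  · -- a and b are far apart: two arcs J⁺ (between a and b) and J⁻ (between b and a)
    push_neg at hγcase
    obtain ⟨hγlo, hγhi⟩ := hγcase
    set Jp : Set S1 := ((↑) : ℝ → S1) '' Set.Icc (α + ε) (α + γ - ε) with hJpdef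
    set Jm : Set S1 := ((↑) : ℝ → S1) '' Set.Icc (α + γ + ε) (α + 1 - ε) with hJmdef
    have hJpB : Jp ⊆ Bᶜ := by
      rintro - ⟨s, hs, rfl⟩
      exact keyB s (Or.inl ⟨by linarith [hs.1], by linarith [hs.2]⟩)
    have hJmB : Jm ⊆ Bᶜ := by
      rintro - ⟨s, hs, rfl⟩
      exact keyB s (Or.inr ⟨by linarith [hs.1], by linarith [hs.2]⟩)
    have hJpconn : IsPreconnected Jp :=
      isPreconnected_Icc.image _ (AddCircle.continuous_mk' 1).continuousOn
    have hJmconn : IsPreconnected Jm :=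
      isPreconnected_Icc.image _ (AddCircle.continuous_mk' 1).continuousOn
    have hJpne : Jp.Nonempty := ⟨_, Set.mem_image_of_mem _ (Set.left_mem_Icc.mpr (by linarith))⟩
    have hJmne : Jm.Nonempty := ⟨_, Set.mem_image_of_mem _ (Set.left_mem_Icc.mpr (by linarith))⟩
    have hvolJp : ENNReal.ofReal (γ - 2 * ε) ≤ volume Jp := by
      have := arc_volume_ge (u := α + ε) (v := α + γ - ε) (by linarith)
      convert this using 2
      ring
    have hvolJm : ENNReal.ofReal (1 - γ - 2 * ε) ≤ volume Jm := by
      have := arc_volume_ge (u := α + γ + ε) (v := α + 1 - ε) (by linarith)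
      convert this using 2
      ring
    have hmax : 1 < 3 * max (γ - 2 * ε) (1 - γ - 2 * ε) := by
      rcases max_cases (γ - 2 * ε) (1 - γ - 2 * ε) with ⟨he, hle⟩ | ⟨he, hle⟩ <;>
        rw [he] <;> linarith
    have hmax' : 1 < 3 * max (1 - γ - 2 * ε) (γ - 2 * ε) := by
      rwa [max_comm]
    -- where is z?
    have hzcoe : z = ((α + t : ℝ) : S1) := by
      rw [AddCircle.coe_add, hα, ht]
      abel
    have htγ : t - γ > 7 * ε ∨ t - γ < -(7 * ε) := by
      rcases le_or_gt (t - γ) (7 * ε) with h | h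
      · right
        rcases le_or_gt (-(7 * ε)) (t - γ) with h' | h'
        · exfalso
          have h1 : ‖((t - γ : ℝ) : S1)‖ ≤ |t - γ| := norm_coe_le_abs _
          have h2 : |t - γ| ≤ 7 * ε := abs_le.mpr ⟨h', h⟩
          rw [hdb] at h7b
          linarith
        · exact h'
      · left; exact h
    rcases htγ with hzm | hzp
    · -- z ∈ Jm
      have hzJm : z ∈ Jm := by
        refine ⟨α + t, ⟨by linarith, by linarith⟩, hzcoe.symm⟩
      exact holes_clash hN hBfin ⟨hHE.1, hHE.2.1, hHE.2.2.1, hHE.2.2.2⟩ hk hJmconn hJpconn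
        hJmB hJpB hJpne hzJm hz hvolJm hvolJp (by linarith) hmax'
    · -- z ∈ Jp
      have hzJp : z ∈ Jp := by
        refine ⟨α + t, ⟨by linarith, by linarith⟩, hzcoe.symm⟩
      exact holes_clash hN hBfin ⟨hHE.1, hHE.2.1, hHE.2.2.1, hHE.2.2.2⟩ hk hJpconn hJmconn
        hJpB hJmB hJmne hzJp hz hvolJp hvolJm (by linarith) hmax

end Stmt17Aux


/-- if CH(T_{i_n}) converges to a (possibly degenerate) chord p with
endpoints a, b, and x_n lies in one of the N-2 smallest holes of T_{i_n}, then the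
set of limit points of (x_n) is non-empty and contained in p ∩ S¹ = {a, b}. -/
theorem stmt17 (d N : ℕ) (hd : 2 ≤ d) (hN : 3 ≤ N) (T : Set S1)
    (hw : Wandering d N T)
    (H : ℕ → Fin N → Set S1)
    (hH : ∀ n, IsHoleEnum ((fd d)^[n] '' T) (H n))
    (idx : ℕ → ℕ) (hidx : StrictMono idx) (a b : S1)
    (hconv : Tendsto (fun n => hausdorffDist (CH ((fd d)^[idx n] '' T)) (chord a b))
      atTop (nhds 0))
    (x : ℕ → S1)
    (hx : ∀ n, ∃ k : Fin N, (k : ℕ) < N - 2 ∧ x n ∈ H (idx n) k) :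
    (∃ y : S1, MapClusterPt y atTop x) ∧
    (∀ y : S1, MapClusterPt y atTop x → y = a ∨ y = b) := by
  constructor
  · obtain ⟨y, hy⟩ := exists_clusterPt_of_compactSpace (Filter.map x atTop)
    exact ⟨y, hy⟩
  · intro y hy
    have key : ∀ ε : ℝ, 0 < ε → ε < 1 / 100 → dist y a ≤ 7 * ε ∨ dist y b ≤ 7 * ε := by
      intro ε hε hε'
      obtain ⟨δ, hδ, hδ'⟩ := Stmt17Aux.exists_delta a b hε
      have hev : ∀ᶠ n in atTop,
          hausdorffDist (CH ((fd d)^[idx n] '' T)) (chord a b) < δ :=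
        hconv.eventually_lt_const hδ
      set C := Metric.closedBall a (7 * ε) ∪ Metric.closedBall b (7 * ε) with hCdef
      have hCev : ∀ᶠ n in atTop, x n ∈ C := by
        filter_upwards [hev] with n hn
        have hB : ((fd d)^[idx n] '' T).ncard = N := (hw (idx n) 0).1
        have hvert : ∀ v ∈ (fd d)^[idx n] '' T, dist v a < ε ∨ dist v b < ε := by
          intro v hv
          apply hδ'
          have h1 : emb v ∈ CH ((fd d)^[idx n] '' T) :=
            subset_convexHull ℝ _ (Set.mem_image_of_mem _ hv)
          have hCHne : (CH ((fd d)^[idx n] '' T)).Nonempty := ⟨_, h1⟩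
          have hCHb : Bornology.IsBounded (CH ((fd d)^[idx n] '' T)) := by
            apply Bornology.IsBounded.subset (Metric.isBounded_closedBall (x := (0 : ℂ)) (r := 1))
            apply convexHull_min _ (convex_closedBall _ _)
            rintro - ⟨w, -, rfl⟩
            exact Stmt17Aux.emb_mem_closedBall w
          have hfin : EMetric.hausdorffEdist (CH ((fd d)^[idx n] '' T)) (chord a b) ≠ ⊤ :=
            Metric.hausdorffEdist_ne_top_of_nonempty_of_bounded hCHne
              (Stmt17Aux.chord_nonempty a b) hCHb (Stmt17Aux.chord_bounded a b)
          calc Metric.infDist (emb v) (chord a b)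
              ≤ hausdorffDist (CH ((fd d)^[idx n] '' T)) (chord a b) :=
                Metric.infDist_le_hausdorffDist_of_mem h1 hfin
            _ ≤ δ := hn.le
        obtain ⟨k, hk, hxk⟩ := hx n
        rcases Stmt17Aux.small_hole_near hN hB (hH (idx n)) a b hε hε' hvert hk hxk with h | h
        · exact Or.inl (Metric.mem_closedBall.mpr h)
        · exact Or.inr (Metric.mem_closedBall.mpr h)
      have hCcl : IsClosed C := IsClosed.union Metric.isClosed_closedBall Metric.isClosed_closedBall
      have hyC : y ∈ C := by
        have h1 : ClusterPt y (Filter.map x atTop) := hy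
        have h2 : 𝓝 y ⊓ Filter.map x atTop ≤ 𝓝 y ⊓ 𝓟 C :=
          inf_le_inf_left _ (Filter.le_principal_iff.mpr (Filter.mem_map.mpr hCev))
        have h3 : (𝓝 y ⊓ 𝓟 C).NeBot := h1.neBot.mono h2
        have h4 : ClusterPt y (𝓟 C) := h3
        have := mem_closure_iff_clusterPt.mpr h4
        rwa [hCcl.closure_eq] at this
      rcases hyC with h | h
      · exact Or.inl (Metric.mem_closedBall.mp h)
      · exact Or.inr (Metric.mem_closedBall.mp h)
    by_contra hcon
    push_neg at hcon
    obtain ⟨hya, hyb⟩ := hcon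
    have hda : 0 < dist y a := dist_pos.mpr hya
    have hdb : 0 < dist y b := dist_pos.mpr hyb
    set r := min (dist y a) (dist y b) with hr
    have hrpos : 0 < r := lt_min hda hdb
    have hεpos : 0 < min (r / 14) (1 / 200) := lt_min (by positivity) (by norm_num)
    have hεlt : min (r / 14) (1 / 200) < 1 / 100 :=
      lt_of_le_of_lt (min_le_right _ _) (by norm_num)
    have h14 : 7 * min (r / 14) (1 / 200) ≤ r / 2 := by
      have := min_le_left (r / 14) (1 / 200)
      linarith
    rcases key _ hεpos hεlt with h | h
    · have hrle : r ≤ dist y a := min_le_left _ _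
      linarith
    · have hrle : r ≤ dist y b := min_le_right _ _
      linarith
end
end
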